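/- A cuspidal plane cubic over ℂ is homeomorphic (in the Euclidean topology) to the projective line P¹(ℂ), i.e., to the 2-sphere, yet it is not isomorphic to P¹ as an algebraic variety (it is singular). Hence the degree of the conormal variety (−3 vs −2) is not a topological invariant. -/

import Mathlib

open Projectivization

/-- The Euclidean (quotient) topology on the complex projective space
`P(V) = (V ∖ {0}) / ℂ*`, as a quotient of the subspace `V ∖ {0}` of `V`. -/
noncomputable instance projectivizationTopology (V : Type*) [AddCommGroup V] [Module ℂ V]
    [TopologicalSpace V] : TopologicalSpace (Projectivization ℂ V) :=
  instTopologicalSpaceQuotient (s := projectivizationSetoid ℂ V)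

/-- The homogeneous cubic `F(x, y, z) = y²z - x³` defining the cuspidal plane cubic. -/
noncomputable def cuspCubicF (v : Fin 3 → ℂ) : ℂ := v 1 ^ 2 * v 2 - v 0 ^ 3

/-- The cuspidal cubic `C = {y²z = x³} ⊂ P²(ℂ)` as a subset of the complex projective
plane (with the Euclidean topology). Since `F` is homogeneous, the condition is
independent of the chosen representative. -/
noncomputable def cuspCubic : Set (Projectivization ℂ (Fin 3 → ℂ)) :=
  {p | cuspCubicF p.rep = 0}

noncomputable section CuspAux

abbrev ProjS (n : ℕ) := { v : Fin n → ℂ // v ≠ 0 }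

def projQ {n : ℕ} (v : ProjS n) : Projectivization ℂ (Fin n → ℂ) := Quotient.mk'' v

lemma projQ_eq {n : ℕ} (v : ProjS n) : projQ v = Projectivization.mk ℂ v.1 v.2 := rfl

lemma projQ_rel_iff {n : ℕ} (a b : ProjS n) :
    projQ a = projQ b ↔ ∀ i j, a.1 i * b.1 j = a.1 j * b.1 i := by
  rw [projQ_eq, projQ_eq, mk_eq_mk_iff']
  constructor
  · rintro ⟨c, hc⟩ i j
    have hi := congrFun hc i
    have hj := congrFun hc j
    simp only [Pi.smul_apply, smul_eq_mul] at hi hj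
    rw [← hi, ← hj]; ring
  · intro h
    obtain ⟨j, hj⟩ := Function.ne_iff.1 b.2
    simp only [Pi.zero_apply] at hj
    refine ⟨a.1 j / b.1 j, funext fun i => ?_⟩
    simp only [Pi.smul_apply, smul_eq_mul]
    field_simp
    linear_combination -(h i j)

lemma continuous_projQ {n : ℕ} : Continuous (projQ (n := n)) := continuous_quotient_mk'

lemma isOpenMap_projQ {n : ℕ} : IsOpenMap (projQ (n := n)) := by
  intro U hU
  have key : projQ ⁻¹' (projQ '' U) =
      ⋃ a : ℂˣ, (fun v : ProjS n => (⟨(a : ℂ) • v.1, smul_ne_zero a.ne_zero v.2⟩ : ProjS n)) ⁻¹' U := by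
    ext v
    simp only [Set.mem_preimage, Set.mem_image, Set.mem_iUnion]
    constructor
    · rintro ⟨u, hu, huv⟩
      rw [projQ_eq, projQ_eq, mk_eq_mk_iff] at huv
      obtain ⟨a, ha⟩ := huv
      refine ⟨a, ?_⟩
      have : (⟨(a : ℂ) • v.1, smul_ne_zero a.ne_zero v.2⟩ : ProjS n) = u := by
        apply Subtype.ext
        simpa [Units.smul_def] using ha
      rwa [this]
    · rintro ⟨a, ha⟩
      refine ⟨_, ha, ?_⟩
      rw [projQ_eq, projQ_eq, mk_eq_mk_iff]
      exact ⟨a, rfl⟩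
  have : IsOpen (projQ ⁻¹' (projQ '' U)) := by
    rw [key]
    exact isOpen_iUnion fun a =>
      hU.preimage ((continuous_subtype_val.const_smul (a : ℂ)).subtype_mk _)
  exact (isQuotientMap_quotient_mk').isOpen_preimage.mp this

instance projT2 (n : ℕ) : T2Space (Projectivization ℂ (Fin n → ℂ)) := by
  constructor
  intro x y hxy
  induction x using Projectivization.ind with | h v hv => ?_
  induction y using Projectivization.ind with | h w hw => ?_
  set R : Set (ProjS n × ProjS n) := {p | ∀ i j, p.1.1 i * p.2.1 j = p.1.1 j * p.2.1 i} with hR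
  have hRclosed : IsClosed R := by
    have : R = ⋂ i, ⋂ j, {p : ProjS n × ProjS n | p.1.1 i * p.2.1 j = p.1.1 j * p.2.1 i} := by
      ext p; simp [hR]
    rw [this]
    refine isClosed_iInter fun i => isClosed_iInter fun j => isClosed_eq ?_ ?_
    · exact (((continuous_apply i).comp continuous_subtype_val).comp continuous_fst).mul
        (((continuous_apply j).comp continuous_subtype_val).comp continuous_snd)
    · exact (((continuous_apply j).comp continuous_subtype_val).comp continuous_fst).mul
        (((continuous_apply i).comp continuous_subtype_val).comp continuous_snd)
  have hmem : ((⟨v, hv⟩ : ProjS n), (⟨w, hw⟩ : ProjS n)) ∈ Rᶜ := by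
    intro h
    exact hxy ((projQ_rel_iff ⟨v, hv⟩ ⟨w, hw⟩).2 h)
  obtain ⟨U, W, hUopen, hWopen, hvU, hwW, hUW⟩ :=
    isOpen_prod_iff.1 hRclosed.isOpen_compl _ _ hmem
  refine ⟨projQ '' U, projQ '' W, isOpenMap_projQ U hUopen, isOpenMap_projQ W hWopen,
    ⟨_, hvU, rfl⟩, ⟨_, hwW, rfl⟩, ?_⟩
  rw [Set.disjoint_left]
  rintro z ⟨u, hu, rfl⟩ ⟨u', hu', hq⟩
  exact hUW (Set.mk_mem_prod hu hu') ((projQ_rel_iff u u').1 hq.symm)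

instance projCompact2 : CompactSpace (Projectivization ℂ (Fin 2 → ℂ)) := by
  have hne : ∀ v : Metric.sphere (0 : Fin 2 → ℂ) 1, v.1 ≠ 0 := by
    intro v h
    have := v.2
    rw [mem_sphere_zero_iff_norm, h] at this
    simp at this
  set m : Metric.sphere (0 : Fin 2 → ℂ) 1 → Projectivization ℂ (Fin 2 → ℂ) :=
    fun v => projQ ⟨v.1, hne v⟩ with hm
  have hcont : Continuous m :=
    continuous_projQ.comp (continuous_subtype_val.subtype_mk _)
  have hsurj : Function.Surjective m := by
    intro x
    induction x using Projectivization.ind with | h v hv => ?_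
    have hnv : ‖v‖ ≠ 0 := norm_ne_zero_iff.2 hv
    have hu : ‖((‖v‖ : ℂ))⁻¹ • v‖ = 1 := by
      rw [norm_smul, norm_inv, Complex.norm_real, Real.norm_eq_abs, abs_of_nonneg (norm_nonneg v),
        inv_mul_cancel₀ hnv]
    refine ⟨⟨(‖v‖ : ℂ)⁻¹ • v, by rwa [mem_sphere_zero_iff_norm]⟩, ?_⟩
    rw [hm]
    simp only [projQ_eq]
    rw [mk_eq_mk_iff']
    exact ⟨(‖v‖ : ℂ)⁻¹, rfl⟩
  constructor
  rw [← Set.range_eq_univ.2 hsurj]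
  exact isCompact_range hcont

end CuspAux

lemma cuspCubicF_smul (c : ℂ) (v : Fin 3 → ℂ) :
    cuspCubicF (c • v) = c ^ 3 * cuspCubicF v := by
  simp only [cuspCubicF, Pi.smul_apply, smul_eq_mul]; ring

def cuspParam (v : Fin 2 → ℂ) : Fin 3 → ℂ := ![v 0 * v 1 ^ 2, v 1 ^ 3, v 0 ^ 3]

lemma cuspParam_ne_zero {v : Fin 2 → ℂ} (hv : v ≠ 0) : cuspParam v ≠ 0 := by
  intro h
  apply hv
  have h1 := congrFun h 1
  have h2 := congrFun h 2
  simp only [cuspParam, Matrix.cons_val_one, Matrix.head_cons, Matrix.cons_val_two,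
    Matrix.tail_cons, Pi.zero_apply, pow_eq_zero_iff] at h1 h2
  funext i
  fin_cases i
  · simpa using h2
  · simpa using h1

lemma cuspParam_smul (c : ℂ) (v : Fin 2 → ℂ) : cuspParam (c • v) = c ^ 3 • cuspParam v := by
  funext i
  fin_cases i <;> simp [cuspParam] <;> ring

noncomputable def cuspPhi : Projectivization ℂ (Fin 2 → ℂ) → Projectivization ℂ (Fin 3 → ℂ) :=
  Projectivization.lift
    (fun v : ProjS 2 => Projectivization.mk ℂ (cuspParam v.1) (cuspParam_ne_zero v.2))
    (by
      rintro ⟨a, ha⟩ ⟨b, hb⟩ t (h : a = t • b)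
      simp only
      rw [mk_eq_mk_iff']
      exact ⟨t ^ 3, by rw [← cuspParam_smul, ← h]⟩)

@[simp] lemma cuspPhi_mk (v : Fin 2 → ℂ) (hv : v ≠ 0) :
    cuspPhi (Projectivization.mk ℂ v hv) = Projectivization.mk ℂ (cuspParam v) (cuspParam_ne_zero hv) :=
  rfl

lemma continuous_cuspPhi : Continuous cuspPhi := by
  refine (isQuotientMap_quotient_mk' (s := projectivizationSetoid ℂ (Fin 2 → ℂ))).continuous_iff.2 ?_
  have : Continuous (cuspParam) := by
    apply continuous_pi
    intro i
    fin_cases i <;> simp only [cuspParam, Matrix.cons_val_zero, Matrix.cons_val_one,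
      Matrix.head_cons, Matrix.cons_val_two, Matrix.tail_cons]
    · exact (continuous_apply 0).mul ((continuous_apply 1).pow 2)
    · exact (continuous_apply 1).pow 3
    · exact (continuous_apply 0).pow 3
  exact continuous_projQ.comp ((this.comp continuous_subtype_val).subtype_mk _)

lemma cuspPhi_injective : Function.Injective cuspPhi := by
  intro x y h
  induction x using Projectivization.ind with | h v hv => ?_
  induction y using Projectivization.ind with | h w hw => ?_
  rw [cuspPhi_mk, cuspPhi_mk, mk_eq_mk_iff'] at h
  obtain ⟨a, ha⟩ := h
  have h0 := congrFun ha 0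
  have h1 := congrFun ha 1
  have h2 := congrFun ha 2
  simp only [cuspParam, Pi.smul_apply, smul_eq_mul, Matrix.cons_val_zero, Matrix.cons_val_one,
    Matrix.head_cons, Matrix.cons_val_two, Matrix.tail_cons] at h0 h1 h2
  rw [mk_eq_mk_iff']
  by_cases hw1 : w 1 = 0
  · have hw0 : w 0 ≠ 0 := by
      intro h'
      apply hw; funext i; fin_cases i <;> simp [h', hw1]
    have hv1 : v 1 = 0 := by
      have : v 1 ^ 3 = 0 := by rw [← h1, hw1]; ring
      exact pow_eq_zero_iff (by norm_num) |>.1 this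
    have ha' : a ≠ 0 := by
      intro h'
      apply hv
      have hv0 : v 0 = 0 := by
        have : v 0 ^ 3 = 0 := by rw [← h2, h']; ring
        exact pow_eq_zero_iff (by norm_num) |>.1 this
      funext i; fin_cases i <;> simp [hv0, hv1]
    refine ⟨v 0 / w 0, funext fun i => ?_⟩
    fin_cases i
    · simp [div_mul_cancel₀, hw0]
    · simp [hw1, hv1]
  · have hv1 : v 1 ≠ 0 := by
      intro h'
      apply hv
      have ha' : a = 0 := by
        have : a * w 1 ^ 3 = 0 := by rw [h1, h']; ring
        rcases mul_eq_zero.1 this with h'' | h''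
        · exact h''
        · exact absurd (pow_eq_zero_iff (by norm_num) |>.1 h'') hw1
      have hv0 : v 0 = 0 := by
        have : v 0 ^ 3 = 0 := by rw [← h2, ha']; ring
        exact pow_eq_zero_iff (by norm_num) |>.1 this
      funext i; fin_cases i <;> simp [hv0, h']
    set b := v 1 / w 1 with hb
    have hb3 : b ^ 3 = a := by
      rw [hb, div_pow, ← h1, mul_div_assoc, div_self (pow_ne_zero _ hw1), mul_one]
    refine ⟨b, funext fun i => ?_⟩
    fin_cases i
    · show (b • w) 0 = v 0
      simp only [Pi.smul_apply, smul_eq_mul]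
      have hbw : v 1 = b * w 1 := by rw [hb]; field_simp
      have hbne : b ≠ 0 := div_ne_zero hv1 hw1
      have key : v 0 * (b ^ 2 * w 1 ^ 2) = b * w 0 * (b ^ 2 * w 1 ^ 2) := by
        have key' : v 0 * v 1 ^ 2 = b ^ 3 * (w 0 * w 1 ^ 2) := by rw [hb3]; exact h0.symm
        calc v 0 * (b ^ 2 * w 1 ^ 2) = v 0 * v 1 ^ 2 := by rw [hbw]; ring
        _ = b ^ 3 * (w 0 * w 1 ^ 2) := key'
        _ = b * w 0 * (b ^ 2 * w 1 ^ 2) := by ring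
      exact (mul_right_cancel₀ (mul_ne_zero (pow_ne_zero 2 hbne) (pow_ne_zero 2 hw1)) key).symm
    · simp only [Pi.smul_apply, smul_eq_mul]
      rw [hb]; field_simp
      exact mul_comm _ _

lemma mem_cuspCubic_mk (v : Fin 3 → ℂ) (hv : v ≠ 0) :
    Projectivization.mk ℂ v hv ∈ cuspCubic ↔ cuspCubicF v = 0 := by
  obtain ⟨a, ha⟩ := exists_smul_eq_mk_rep ℂ v hv
  have key : cuspCubicF (Projectivization.mk ℂ v hv).rep = (a : ℂ) ^ 3 * cuspCubicF v := by
    rw [← ha, Units.smul_def, cuspCubicF_smul]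
  constructor
  · intro h
    have h2 : cuspCubicF (Projectivization.mk ℂ v hv).rep = 0 := h
    rw [key] at h2
    rcases mul_eq_zero.1 h2 with h' | h'
    · exact absurd (pow_eq_zero_iff (by norm_num) |>.1 h') a.ne_zero
    · exact h'
  · intro h
    show cuspCubicF _ = 0
    rw [key, h, mul_zero]

lemma cuspPhi_mem (x : Projectivization ℂ (Fin 2 → ℂ)) : cuspPhi x ∈ cuspCubic := by
  induction x using Projectivization.ind with | h v hv => ?_
  rw [cuspPhi_mk, mem_cuspCubic_mk]
  simp only [cuspCubicF, cuspParam, Matrix.cons_val_zero, Matrix.cons_val_one, Matrix.head_cons,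
    Matrix.cons_val_two, Matrix.tail_cons]
  ring

lemma cuspPhi_surj (p : Projectivization ℂ (Fin 3 → ℂ)) (hp : p ∈ cuspCubic) :
    ∃ x, cuspPhi x = p := by
  induction p using Projectivization.ind with | h u hu => ?_
  rw [mem_cuspCubic_mk] at hp
  have hp' : u 1 ^ 2 * u 2 = u 0 ^ 3 := sub_eq_zero.1 hp
  by_cases h0 : u 0 = 0
  · by_cases h1 : u 1 = 0
    · have h2 : u 2 ≠ 0 := by
        intro h2; apply hu; funext i; fin_cases i <;> simp [h0, h1, h2]
      refine ⟨Projectivization.mk ℂ ![1, 0] (by intro h; simpa using congrFun h 0), ?_⟩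
      rw [cuspPhi_mk, mk_eq_mk_iff']
      refine ⟨(u 2)⁻¹, funext fun i => ?_⟩
      fin_cases i <;>
        simp [cuspParam, h0, h1, inv_mul_cancel₀ h2]
    · have h2 : u 2 = 0 := by
        have : u 1 ^ 2 * u 2 = 0 := by rw [hp', h0]; ring
        rcases mul_eq_zero.1 this with h' | h'
        · exact absurd (pow_eq_zero_iff (by norm_num) |>.1 h') h1
        · exact h'
      refine ⟨Projectivization.mk ℂ ![0, 1] (by intro h; simpa using congrFun h 1), ?_⟩
      rw [cuspPhi_mk, mk_eq_mk_iff']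
      refine ⟨(u 1)⁻¹, funext fun i => ?_⟩
      fin_cases i <;>
        simp [cuspParam, h0, h2, inv_mul_cancel₀ h1]
  · have hv : (![u 0, u 1] : Fin 2 → ℂ) ≠ 0 := by
      intro h; exact h0 (by simpa using congrFun h 0)
    refine ⟨Projectivization.mk ℂ ![u 0, u 1] hv, ?_⟩
    rw [cuspPhi_mk, mk_eq_mk_iff']
    refine ⟨u 1 ^ 2, funext fun i => ?_⟩
    fin_cases i <;> simp [cuspParam, ← hp'] <;> ring

noncomputable def cuspEquiv : Projectivization ℂ (Fin 2 → ℂ) ≃ cuspCubic :=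
  Equiv.ofBijective (fun x => ⟨cuspPhi x, cuspPhi_mem x⟩)
    ⟨fun a b h => cuspPhi_injective (congrArg Subtype.val h),
     fun p => by obtain ⟨x, hx⟩ := cuspPhi_surj p.1 p.2; exact ⟨x, Subtype.ext hx⟩⟩

lemma cusp_homeo : Nonempty (cuspCubic ≃ₜ Projectivization ℂ (Fin 2 → ℂ)) := by
  have hc : Continuous (cuspEquiv : Projectivization ℂ (Fin 2 → ℂ) → cuspCubic) :=
    continuous_cuspPhi.subtype_mk _
  exact ⟨(hc.homeoOfEquivCompactToT2 (f := cuspEquiv)).symm⟩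

lemma cusp_fderiv : fderiv ℂ cuspCubicF (![0, 0, 1] : Fin 3 → ℂ) = 0 := by
  have h0 := hasFDerivAt_apply (𝕜 := ℂ) 0 (![0, 0, 1] : Fin 3 → ℂ)
  have h1 := hasFDerivAt_apply (𝕜 := ℂ) 1 (![0, 0, 1] : Fin 3 → ℂ)
  have h2 := hasFDerivAt_apply (𝕜 := ℂ) 2 (![0, 0, 1] : Fin 3 → ℂ)
  have H := ((h1.mul h1).mul h2).sub ((h0.mul h0).mul h0)
  have hfun : cuspCubicF = fun v : Fin 3 → ℂ => v 1 * v 1 * v 2 - v 0 * v 0 * v 0 := by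
    funext v; simp only [cuspCubicF]; ring
  have HD : HasFDerivAt cuspCubicF (0 : (Fin 3 → ℂ) →L[ℂ] ℂ) ![0, 0, 1] := by
    rw [hfun]
    refine H.congr_fderiv ?_
    ext x
    simp
  exact HD.fderiv



/-- A cuspidal plane cubic over `ℂ` is homeomorphic, in the Euclidean topology, to the
projective line `P¹(ℂ)` (i.e. to the 2-sphere); yet it is not isomorphic to `P¹` as an
algebraic variety, since it is singular at `[0 : 0 : 1]`: the point lies on the curve and
the derivative of the defining equation vanishes there. Hence the degree of the conormal
variety (`-3` for the cuspidal cubic vs `-2` for a smooth rational curve) is not a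
topological invariant. -/
theorem cuspidal_cubic_homeomorphic_to_P1_but_singular :
    Nonempty (cuspCubic ≃ₜ Projectivization ℂ (Fin 2 → ℂ)) ∧
    (∀ h : (![0, 0, 1] : Fin 3 → ℂ) ≠ 0,
      Projectivization.mk ℂ (![0, 0, 1] : Fin 3 → ℂ) h ∈ cuspCubic) ∧
    fderiv ℂ cuspCubicF (![0, 0, 1] : Fin 3 → ℂ) = 0 := by
  refine ⟨cusp_homeo, fun h => ?_, cusp_fderiv⟩
  rw [mem_cuspCubic_mk]
  simp [cuspCubicF]
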